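/- arXiv:1303.3981 — 2 statements merged into one kernel-verified Lean document; each statement's English description precedes it below -/
import Mathlib

section
/- Let f : (0,∞) → [0,∞] be measurable and let α, ζ, s be real numbers with α > 0 and ζ + s > 0. Then the Mellin transform of the Kober fractional integral operator of the second kind of order α with parameter ζ satisfies ∫_0^∞ u^{s−1} [ (u^{ζ}/Γ(α)) ∫_u^∞ v^{−ζ−α} (v−u)^{α−1} f(v) dv ] du = [Γ(ζ+s)/Γ(α+ζ+s)] · ∫_0^∞ v^{s−1} f(v) dv, the identity holding in [0,∞]. -/
open MeasureTheory ENNReal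

private lemma real_beta01 (a b : ℝ) (ha : 0 < a) (hb : 0 < b) :
    ∫⁻ x in Set.Ioo (0:ℝ) 1, ENNReal.ofReal (x ^ (a-1) * (1-x) ^ (b-1)) =
      ENNReal.ofReal (Real.Gamma a * Real.Gamma b / Real.Gamma (a+b)) := by
  have ha' : 0 < (a:ℂ).re := by simpa using ha
  have hb' : 0 < (b:ℂ).re := by simpa using hb
  have hF : IntegrableOn (fun x : ℝ => (x:ℂ) ^ ((a:ℂ)-1) * ((1:ℂ)-x) ^ ((b:ℂ)-1))
      (Set.Ioo 0 1) := by
    exact ((intervalIntegrable_iff_integrableOn_Ioc_of_le zero_le_one).mp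
      (Complex.betaIntegral_convergent ha' hb')).mono_set Set.Ioo_subset_Ioc_self
  have heq : Set.EqOn (fun x : ℝ => (x:ℂ) ^ ((a:ℂ)-1) * ((1:ℂ)-x) ^ ((b:ℂ)-1))
      (fun x : ℝ => ((x ^ (a-1) * (1-x) ^ (b-1) : ℝ) : ℂ)) (Set.Ioo 0 1) := by
    intro x hx
    simp only
    rw [Complex.ofReal_mul, Complex.ofReal_cpow hx.1.le,
      Complex.ofReal_cpow (by linarith [hx.2] : (0:ℝ) ≤ 1 - x)]
    push_cast
    ring_nf
  have hg : IntegrableOn (fun x : ℝ => x ^ (a-1) * (1-x) ^ (b-1)) (Set.Ioo 0 1) := by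
    have h1 := ((hF.congr_fun heq measurableSet_Ioo).re)
    exact IntegrableOn.congr_fun h1 (fun x _ => by simp) measurableSet_Ioo
  have hval : ∫ x in Set.Ioo (0:ℝ) 1, x ^ (a-1) * (1-x) ^ (b-1) =
      Real.Gamma a * Real.Gamma b / Real.Gamma (a+b) := by
    have h2 : ∫ x in Set.Ioo (0:ℝ) 1, (x:ℂ) ^ ((a:ℂ)-1) * ((1:ℂ)-x) ^ ((b:ℂ)-1) =
        Complex.betaIntegral a b := by
      rw [Complex.betaIntegral, intervalIntegral.integral_of_le zero_le_one,
        MeasureTheory.integral_Ioc_eq_integral_Ioo]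
    have h5 : Complex.Gamma ((a:ℂ)+(b:ℂ)) ≠ 0 := by
      rw [show ((a:ℂ)+(b:ℂ)) = ((a+b:ℝ):ℂ) by push_cast; ring, Complex.Gamma_ofReal]
      exact_mod_cast (Real.Gamma_pos_of_pos (by linarith : (0:ℝ) < a + b)).ne'
    have h3 : Complex.betaIntegral a b =
        ((Real.Gamma a * Real.Gamma b / Real.Gamma (a+b) : ℝ) : ℂ) := by
      have h4 := Complex.Gamma_mul_Gamma_eq_betaIntegral ha' hb'
      have hβ : Complex.betaIntegral a b =
          Complex.Gamma a * Complex.Gamma b / Complex.Gamma ((a:ℂ)+(b:ℂ)) := by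
        rw [h4]; field_simp
      rw [hβ, show ((a:ℂ)+(b:ℂ)) = ((a+b:ℝ):ℂ) by push_cast; ring,
        Complex.Gamma_ofReal, Complex.Gamma_ofReal, Complex.Gamma_ofReal]
      push_cast
      ring
    have h7 : Complex.betaIntegral a b =
        ((∫ x in Set.Ioo (0:ℝ) 1, x ^ (a-1) * (1-x) ^ (b-1) : ℝ) : ℂ) := by
      rw [← h2, setIntegral_congr_fun measurableSet_Ioo heq]
      exact integral_ofReal
    exact_mod_cast h7.symm.trans h3
  rw [← hval]
  refine (ofReal_integral_eq_lintegral_ofReal hg ?_).symm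
  filter_upwards [ae_restrict_mem measurableSet_Ioo] with x hx
  exact mul_nonneg (Real.rpow_nonneg hx.1.le _) (Real.rpow_nonneg (by linarith [hx.2]) _)
lemma real_beta_scaled (a b v : ℝ) (ha : 0 < a) (hb : 0 < b) (hv : 0 < v) :
    ∫⁻ u in Set.Ioo (0:ℝ) v, ENNReal.ofReal (u ^ (a-1) * (v-u) ^ (b-1)) =
      ENNReal.ofReal (v ^ (a+b-1)) *
        ENNReal.ofReal (Real.Gamma a * Real.Gamma b / Real.Gamma (a+b)) := by
  have hmeas : Measurable (fun u : ℝ => ENNReal.ofReal (u ^ (a-1) * (v-u) ^ (b-1))) := by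
    exact ((measurable_id.pow measurable_const).mul
      ((measurable_const.sub measurable_id).pow measurable_const)).ennreal_ofReal
  have hpre : (fun x : ℝ => v * x) ⁻¹' Set.Ioo 0 v = Set.Ioo 0 1 := by
    ext x
    simp only [Set.mem_preimage, Set.mem_Ioo]
    constructor
    · rintro ⟨h1, h2⟩
      exact ⟨by nlinarith, (mul_lt_iff_lt_one_right hv).mp h2⟩
    · rintro ⟨h1, h2⟩
      exact ⟨mul_pos hv h1, (mul_lt_iff_lt_one_right hv).mpr h2⟩
  have h1 : ∫⁻ u in Set.Ioo (0:ℝ) v, ENNReal.ofReal (u ^ (a-1) * (v-u) ^ (b-1))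
        ∂(Measure.map (fun x : ℝ => v * x) volume) =
      ∫⁻ x in Set.Ioo (0:ℝ) 1, ENNReal.ofReal ((v*x) ^ (a-1) * (v-v*x) ^ (b-1)) := by
    rw [setLIntegral_map measurableSet_Ioo hmeas (measurable_const_mul v), hpre]
  rw [Real.map_volume_mul_left hv.ne'] at h1
  rw [Measure.restrict_smul, lintegral_smul_measure, abs_of_pos (inv_pos.mpr hv)] at h1
  have h2 : ∫⁻ u in Set.Ioo (0:ℝ) v, ENNReal.ofReal (u ^ (a-1) * (v-u) ^ (b-1)) =
      ENNReal.ofReal v * ∫⁻ x in Set.Ioo (0:ℝ) 1,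
        ENNReal.ofReal ((v*x) ^ (a-1) * (v-v*x) ^ (b-1)) := by
    rw [← h1, smul_eq_mul, ← mul_assoc, ← ENNReal.ofReal_mul hv.le, mul_inv_cancel₀ hv.ne',
      ENNReal.ofReal_one, one_mul]
  rw [h2]
  have h3 : ∀ x ∈ Set.Ioo (0:ℝ) 1, ENNReal.ofReal ((v*x) ^ (a-1) * (v-v*x) ^ (b-1)) =
      ENNReal.ofReal (v ^ (a-1) * v ^ (b-1)) *
        ENNReal.ofReal (x ^ (a-1) * (1-x) ^ (b-1)) := by
    intro x hx
    rw [← ENNReal.ofReal_mul (mul_nonneg (Real.rpow_nonneg hv.le _) (Real.rpow_nonneg hv.le _))]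
    congr 1
    rw [show v - v*x = v * (1-x) by ring, Real.mul_rpow hv.le hx.1.le,
      Real.mul_rpow hv.le (by linarith [hx.2] : (0:ℝ) ≤ 1 - x)]
    ring
  rw [setLIntegral_congr_fun measurableSet_Ioo h3,
    lintegral_const_mul' _ _ ENNReal.ofReal_ne_top, real_beta01 a b ha hb, ← mul_assoc,
    ← ENNReal.ofReal_mul hv.le]
  congr 2
  rw [show a + b - 1 = 1 + (a-1) + (b-1) by ring, Real.rpow_add hv, Real.rpow_add hv,
    Real.rpow_one]
  ring

lemma swap_tri (F : ℝ → ℝ → ℝ≥0∞) (hF : Measurable (Function.uncurry F)) :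
    ∫⁻ u in Set.Ioi (0:ℝ), ∫⁻ v in Set.Ioi u, F u v =
    ∫⁻ v in Set.Ioi (0:ℝ), ∫⁻ u in Set.Ioo 0 v, F u v := by
  have h1 : ∀ u ∈ Set.Ioi (0:ℝ), ∫⁻ v in Set.Ioi u, F u v =
      ∫⁻ v in Set.Ioi (0:ℝ), (Set.Ioi u).indicator (F u) v := by
    intro u hu
    rw [lintegral_indicator measurableSet_Ioi, Measure.restrict_restrict measurableSet_Ioi,
      Set.inter_eq_self_of_subset_left (Set.Ioi_subset_Ioi (le_of_lt hu))]
  rw [setLIntegral_congr_fun measurableSet_Ioi h1]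
  have hu : Measurable (Function.uncurry fun u v => (Set.Ioi u).indicator (F u) v) := by
    have : (Function.uncurry fun u v => (Set.Ioi u).indicator (F u) v) =
        {p : ℝ × ℝ | p.1 < p.2}.indicator (Function.uncurry F) := by
      funext p
      simp [Function.uncurry, Set.indicator_apply, Set.mem_Ioi]
    rw [this]
    exact hF.indicator (measurableSet_lt measurable_fst measurable_snd)
  rw [lintegral_lintegral_swap hu.aemeasurable]
  refine setLIntegral_congr_fun measurableSet_Ioi (fun v hv => ?_)
  have h2 : (fun u => (Set.Ioi u).indicator (F u) v) =
      fun u => (Set.Iio v).indicator (fun u => F u v) u := by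
    funext u
    simp [Set.indicator_apply, Set.mem_Ioi, Set.mem_Iio]
  rw [h2, lintegral_indicator measurableSet_Iio, Measure.restrict_restrict measurableSet_Iio,
    Set.Iio_inter_Ioi]


/-- Mellin transform of the Kober fractional integral operator of the second
kind of order `α` with parameter `ζ`:
`M{K^{ζ,α} f}(s) = [Γ(ζ+s)/Γ(α+ζ+s)] f*(s)`. -/
theorem mellin_kober_second_kind (f : ℝ → ℝ≥0∞) (hf : Measurable f)
    (α ζ s : ℝ) (hα : 0 < α) (hζs : 0 < ζ + s) :
    ∫⁻ u in Set.Ioi (0 : ℝ), ENNReal.ofReal (u ^ (s - 1)) *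
      (ENNReal.ofReal (u ^ ζ / Real.Gamma α) *
        ∫⁻ v in Set.Ioi u, ENNReal.ofReal (v ^ (-ζ - α) * (v - u) ^ (α - 1)) * f v) =
    ENNReal.ofReal (Real.Gamma (ζ + s) / Real.Gamma (α + ζ + s)) *
      ∫⁻ v in Set.Ioi (0 : ℝ), ENNReal.ofReal (v ^ (s - 1)) * f v := by
  have hΓα := Real.Gamma_pos_of_pos hα
  have hA : ∀ u : ℝ, ENNReal.ofReal (u ^ (s - 1)) *
      (ENNReal.ofReal (u ^ ζ / Real.Gamma α) *
        ∫⁻ v in Set.Ioi u, ENNReal.ofReal (v ^ (-ζ - α) * (v - u) ^ (α - 1)) * f v) =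
      ∫⁻ v in Set.Ioi u, ENNReal.ofReal (u ^ (s - 1)) *
        (ENNReal.ofReal (u ^ ζ / Real.Gamma α) *
          (ENNReal.ofReal (v ^ (-ζ - α) * (v - u) ^ (α - 1)) * f v)) := fun u => by
    rw [lintegral_const_mul' _ _ ENNReal.ofReal_ne_top,
      lintegral_const_mul' _ _ ENNReal.ofReal_ne_top]
  rw [lintegral_congr fun u => hA u]
  have hmeasF : Measurable (Function.uncurry fun (u v : ℝ) =>
      ENNReal.ofReal (u ^ (s - 1)) * (ENNReal.ofReal (u ^ ζ / Real.Gamma α) *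
        (ENNReal.ofReal (v ^ (-ζ - α) * (v - u) ^ (α - 1)) * f v))) := by
    apply Measurable.mul
    · exact (measurable_fst.pow measurable_const).ennreal_ofReal
    apply Measurable.mul
    · exact ((measurable_fst.pow measurable_const).div measurable_const).ennreal_ofReal
    apply Measurable.mul
    · exact ((measurable_snd.pow measurable_const).mul
        ((measurable_snd.sub measurable_fst).pow measurable_const)).ennreal_ofReal
    · exact hf.comp measurable_snd
  rw [swap_tri _ hmeasF]
  have hstep : ∀ v ∈ Set.Ioi (0:ℝ),
      (∫⁻ u in Set.Ioo 0 v, ENNReal.ofReal (u ^ (s - 1)) *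
        (ENNReal.ofReal (u ^ ζ / Real.Gamma α) *
          (ENNReal.ofReal (v ^ (-ζ - α) * (v - u) ^ (α - 1)) * f v))) =
      ENNReal.ofReal (Real.Gamma (ζ + s) / Real.Gamma (α + ζ + s)) *
        (ENNReal.ofReal (v ^ (s - 1)) * f v) := by
    intro v hv
    have hv' : (0:ℝ) < v := hv
    have hC : ∀ u ∈ Set.Ioo (0:ℝ) v,
        ENNReal.ofReal (u ^ (s - 1)) * (ENNReal.ofReal (u ^ ζ / Real.Gamma α) *
          (ENNReal.ofReal (v ^ (-ζ - α) * (v - u) ^ (α - 1)) * f v)) =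
        ENNReal.ofReal (u ^ ((ζ + s) - 1) * (v - u) ^ (α - 1)) *
          (ENNReal.ofReal (v ^ (-ζ - α) / Real.Gamma α) * f v) := by
      intro u hu
      have h1 : u ^ (s-1) * (u ^ ζ / Real.Gamma α) * (v ^ (-ζ-α) * (v-u) ^ (α-1)) =
          (u ^ ((ζ+s)-1) * (v-u) ^ (α-1)) * (v ^ (-ζ-α) / Real.Gamma α) := by
        rw [show (ζ+s)-1 = (s-1) + ζ by ring, Real.rpow_add hu.1]
        ring
      calc ENNReal.ofReal (u ^ (s - 1)) * (ENNReal.ofReal (u ^ ζ / Real.Gamma α) *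
            (ENNReal.ofReal (v ^ (-ζ - α) * (v - u) ^ (α - 1)) * f v))
          = (ENNReal.ofReal (u ^ (s - 1)) * ENNReal.ofReal (u ^ ζ / Real.Gamma α) *
            ENNReal.ofReal (v ^ (-ζ - α) * (v - u) ^ (α - 1))) * f v := by ring
        _ = ENNReal.ofReal (u ^ (s-1) * (u ^ ζ / Real.Gamma α) *
            (v ^ (-ζ-α) * (v-u) ^ (α-1))) * f v := by
            rw [← ENNReal.ofReal_mul (Real.rpow_nonneg hu.1.le _),
              ← ENNReal.ofReal_mul (mul_nonneg (Real.rpow_nonneg hu.1.le _)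
                (div_nonneg (Real.rpow_nonneg hu.1.le _) hΓα.le))]
        _ = ENNReal.ofReal ((u ^ ((ζ+s)-1) * (v-u) ^ (α-1)) *
            (v ^ (-ζ-α) / Real.Gamma α)) * f v := by rw [h1]
        _ = ENNReal.ofReal (u ^ ((ζ + s) - 1) * (v - u) ^ (α - 1)) *
            (ENNReal.ofReal (v ^ (-ζ - α) / Real.Gamma α) * f v) := by
            rw [ENNReal.ofReal_mul (mul_nonneg (Real.rpow_nonneg hu.1.le _)
              (Real.rpow_nonneg (by linarith [hu.2] : (0:ℝ) ≤ v - u) _))]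
            ring
    rw [setLIntegral_congr_fun measurableSet_Ioo hC]
    have hmeas' : Measurable fun u : ℝ =>
        ENNReal.ofReal (u ^ ((ζ + s) - 1) * (v - u) ^ (α - 1)) :=
      ((measurable_id'.pow measurable_const).mul
        ((measurable_const.sub measurable_id').pow measurable_const)).ennreal_ofReal
    rw [lintegral_mul_const'' _ hmeas'.aemeasurable]
    rw [real_beta_scaled (ζ + s) α v hζs hα hv']
    have hΓζs := Real.Gamma_pos_of_pos hζs
    have hΓsum := Real.Gamma_pos_of_pos (by linarith : (0:ℝ) < (ζ + s) + α)
    have h2 : v ^ ((ζ+s)+α-1) * (Real.Gamma (ζ+s) * Real.Gamma α / Real.Gamma ((ζ+s)+α)) *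
        (v ^ (-ζ-α) / Real.Gamma α) =
        Real.Gamma (ζ+s) / Real.Gamma (α+ζ+s) * v ^ (s-1) := by
      rw [show α+ζ+s = (ζ+s)+α by ring,
        show (s-1 : ℝ) = ((ζ+s)+α-1) + (-ζ-α) by ring, Real.rpow_add hv']
      field_simp
    calc ENNReal.ofReal (v ^ ((ζ+s)+α-1)) *
          ENNReal.ofReal (Real.Gamma (ζ+s) * Real.Gamma α / Real.Gamma ((ζ+s)+α)) *
          (ENNReal.ofReal (v ^ (-ζ - α) / Real.Gamma α) * f v)
        = ENNReal.ofReal (v ^ ((ζ+s)+α-1) *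
            (Real.Gamma (ζ+s) * Real.Gamma α / Real.Gamma ((ζ+s)+α)) *
            (v ^ (-ζ-α) / Real.Gamma α)) * f v := by
          rw [← ENNReal.ofReal_mul (Real.rpow_nonneg hv'.le _), ← mul_assoc,
            ← ENNReal.ofReal_mul (mul_nonneg (Real.rpow_nonneg hv'.le _)
              (div_nonneg (mul_nonneg hΓζs.le hΓα.le) hΓsum.le))]
      _ = ENNReal.ofReal (Real.Gamma (ζ+s) / Real.Gamma (α+ζ+s) * v ^ (s-1)) * f v := by
          rw [h2]
      _ = ENNReal.ofReal (Real.Gamma (ζ + s) / Real.Gamma (α + ζ + s)) *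
          (ENNReal.ofReal (v ^ (s - 1)) * f v) := by
          rw [ENNReal.ofReal_mul (div_nonneg hΓζs.le (Real.Gamma_pos_of_pos
            (by linarith : (0:ℝ) < α+ζ+s)).le)]
          ring
  rw [setLIntegral_congr_fun measurableSet_Ioi hstep,
    lintegral_const_mul' _ _ ENNReal.ofReal_ne_top]
end

section
/- Let ζ > −1 and α > 0 be real, let x₁ and x₂ be independent real random variables where x₁ has the type-1 beta density [Γ(ζ+1+α)/(Γ(ζ+1)Γ(α))] x^{ζ}(1−x)^{α−1} on (0,1) and x₂ has a probability density f supported on (0,∞). Then the product u = x₁x₂ has probability density g(u) = [Γ(ζ+1+α)/(Γ(ζ+1)Γ(α))] · u^{ζ} ∫_u^∞ v^{−ζ−α} (v−u)^{α−1} f(v) dv for u > 0; equivalently, the Kober fractional integral operator of the second kind applied to f, namely (u^{ζ}/Γ(α)) ∫_u^∞ v^{−ζ−α}(v−u)^{α−1} f(v) dv, equals [Γ(ζ+1)/Γ(ζ+1+α)] times the density of x₁x₂. -/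
open MeasureTheory ENNReal

lemma key_real (ζ α u y C fy : ℝ) (hu : 0 < u) (huy : u < y) :
    fy * y⁻¹ * (C * (u / y) ^ ζ * (1 - u / y) ^ (α - 1)) =
      C * u ^ ζ * (y ^ (-ζ - α) * (y - u) ^ (α - 1) * fy) := by
  have hy : 0 < y := hu.trans huy
  have h1 : (1 : ℝ) - u / y = (y - u) / y := by field_simp
  have h2 : y ^ (-ζ - α) = (y ^ ζ)⁻¹ * ((y ^ (α - 1))⁻¹ * y⁻¹) := by
    rw [← Real.rpow_neg hy.le, ← Real.rpow_neg hy.le, ← Real.rpow_neg_one y,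
      ← Real.rpow_add hy, ← Real.rpow_add hy]
    congr 1
    ring
  rw [h1, Real.div_rpow hu.le hy.le, Real.div_rpow (by linarith) hy.le, h2]
  ring

/-- If `x₁` is type-1 beta with parameters `(ζ+1, α)` and `x₂` has density `f`
supported on `(0,∞)`, independent of `x₁`, then `u = x₁x₂` has density
`g(u) = [Γ(ζ+1+α)/(Γ(ζ+1)Γ(α))] u^ζ ∫ᵤ^∞ v^(−ζ−α)(v−u)^(α−1) f(v) dv` for
`u > 0`; i.e. the Kober operator of the second kind applied to `f` is
`Γ(ζ+1)/Γ(ζ+1+α)` times the density of `x₁x₂`. -/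
theorem kober_second_kind_is_density_of_product
    {Ω : Type} [MeasureSpace Ω] [IsProbabilityMeasure (volume : Measure Ω)]
    (ζ α : ℝ) (hζ : -1 < ζ) (hα : 0 < α)
    (X₁ X₂ : Ω → ℝ) (hX₁ : Measurable X₁) (hX₂ : Measurable X₂)
    (hindep : ProbabilityTheory.IndepFun X₁ X₂ (volume : Measure Ω))
    (f : ℝ → ℝ) (hf_meas : Measurable f) (hf_nonneg : ∀ x, 0 ≤ f x)
    (hf_supp : ∀ x ≤ (0 : ℝ), f x = 0)
    (hX₁law : Measure.map X₁ (volume : Measure Ω) =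
      volume.withDensity (fun x => ENNReal.ofReal
        (if x ∈ Set.Ioo (0 : ℝ) 1 then
          Real.Gamma (ζ + 1 + α) / (Real.Gamma (ζ + 1) * Real.Gamma α) *
            x ^ ζ * (1 - x) ^ (α - 1)
        else 0)))
    (hX₂law : Measure.map X₂ (volume : Measure Ω) =
      volume.withDensity (fun x => ENNReal.ofReal (f x))) :
    Measure.map (fun ω => X₁ ω * X₂ ω) (volume : Measure Ω) =
    volume.withDensity (fun u =>
      if 0 < u then
        ENNReal.ofReal (Real.Gamma (ζ + 1 + α) / (Real.Gamma (ζ + 1) * Real.Gamma α) *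
            u ^ ζ) *
          ∫⁻ v in Set.Ioi u,
            ENNReal.ofReal (v ^ (-ζ - α) * (v - u) ^ (α - 1) * f v)
      else 0) := by
  classical
  set C : ℝ := Real.Gamma (ζ + 1 + α) / (Real.Gamma (ζ + 1) * Real.Gamma α) with hC
  set k₁ : ℝ → ℝ≥0∞ := fun x => ENNReal.ofReal
      (if x ∈ Set.Ioo (0 : ℝ) 1 then C * x ^ ζ * (1 - x) ^ (α - 1) else 0) with hk₁
  set k₂ : ℝ → ℝ≥0∞ := fun x => ENNReal.ofReal (f x) with hk₂
  have hk₁m : Measurable k₁ := by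
    apply Measurable.ennreal_ofReal
    apply Measurable.ite measurableSet_Ioo _ measurable_const
    fun_prop
  have hk₂m : Measurable k₂ := hf_meas.ennreal_ofReal
  have hmul : Measurable fun p : ℝ × ℝ => p.1 * p.2 := measurable_fst.mul measurable_snd
  have hmap : Measure.map (fun ω => X₁ ω * X₂ ω) (volume : Measure Ω)
      = Measure.map (fun p : ℝ × ℝ => p.1 * p.2)
          ((volume.withDensity k₁).prod (volume.withDensity k₂)) := by
    rw [← hX₁law, ← hX₂law,
      ← (ProbabilityTheory.indepFun_iff_map_prod_eq_prod_map_map hX₁.aemeasurable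
          hX₂.aemeasurable).mp hindep,
      Measure.map_map hmul (hX₁.prodMk hX₂)]
    rfl
  haveI i1 : IsProbabilityMeasure (volume.withDensity k₁) := by
    rw [← hX₁law]; exact Measure.isProbabilityMeasure_map hX₁.aemeasurable
  haveI i2 : IsProbabilityMeasure (volume.withDensity k₂) := by
    rw [← hX₂law]; exact Measure.isProbabilityMeasure_map hX₂.aemeasurable
  rw [hmap]
  ext s hs
  rw [Measure.map_apply hmul hs, withDensity_apply _ hs,
    Measure.prod_apply_symm (hmul hs),
    lintegral_withDensity_eq_lintegral_mul _ hk₂m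
      (measurable_measure_prodMk_right (hmul hs))]
  simp only [Pi.mul_apply]
  -- Step 1: substitution x = u / y in the inner measure, for each y
  have step1 : ∀ y : ℝ,
      k₂ y * (volume.withDensity k₁) ((fun x => (x, y)) ⁻¹' ((fun p : ℝ × ℝ => p.1 * p.2) ⁻¹' s))
        = k₂ y * (ENNReal.ofReal y⁻¹ * ∫⁻ u in s, k₁ (u / y)) := by
    intro y
    by_cases hfy : f y = 0
    · simp [hk₂, hfy]
    · have hy : 0 < y := by
        by_contra h
        exact hfy (hf_supp y (le_of_not_gt h))
      congr 1
      have hpre : ((fun x => (x, y)) ⁻¹' ((fun p : ℝ × ℝ => p.1 * p.2) ⁻¹' s))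
          = (fun x : ℝ => x * y) ⁻¹' s := rfl
      rw [hpre, withDensity_apply _ (hs.preimage (measurable_mul_const y))]
      have : ∫⁻ x in (fun x : ℝ => x * y) ⁻¹' s, k₁ x
          = ∫⁻ x in (fun x : ℝ => x * y) ⁻¹' s, k₁ ((x * y) / y) := by
        apply lintegral_congr
        intro x
        rw [mul_div_cancel_right₀ _ hy.ne']
      rw [this, ← setLIntegral_map (f := fun u : ℝ => k₁ (u / y)) (g := fun x : ℝ => x * y) hs
        (hk₁m.comp (measurable_id.div_const y)) (measurable_mul_const y),
        Real.map_volume_mul_right hy.ne',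
        Measure.restrict_smul, lintegral_smul_measure, abs_of_pos (inv_pos.mpr hy), smul_eq_mul]
  rw [lintegral_congr step1]
  -- Step 2: pull constants inside and swap the order of integration
  set F : ℝ → ℝ → ℝ≥0∞ := fun y u => k₂ y * ENNReal.ofReal y⁻¹ * k₁ (u / y) with hF
  have step2 : ∀ y : ℝ,
      k₂ y * (ENNReal.ofReal y⁻¹ * ∫⁻ u in s, k₁ (u / y)) = ∫⁻ u in s, F y u := by
    intro y
    rw [← mul_assoc, ← lintegral_const_mul' _ _ (ENNReal.mul_ne_top ofReal_ne_top ofReal_ne_top)]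
  rw [lintegral_congr step2]
  have hFm : AEMeasurable (Function.uncurry F) (volume.prod (volume.restrict s)) := by
    apply Measurable.aemeasurable
    exact ((hk₂m.comp measurable_fst).mul measurable_fst.inv.ennreal_ofReal).mul
      (hk₁m.comp (measurable_snd.div measurable_fst))
  rw [lintegral_lintegral_swap hFm]
  -- Step 3: compute the inner integral for each u
  apply lintegral_congr
  intro u
  by_cases hu : 0 < u
  · simp only [if_pos hu]
    rw [← lintegral_const_mul' _ _ ofReal_ne_top, ← lintegral_indicator measurableSet_Ioi]
    apply lintegral_congr
    intro y
    by_cases hfy : f y = 0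
    · simp only [hF, hk₂, hfy, ENNReal.ofReal_zero, zero_mul, Set.indicator]
      split_ifs
      · simp [hfy]
      · rfl
    · have hy : 0 < y := by
        by_contra h
        exact hfy (hf_supp y (le_of_not_gt h))
      by_cases hyu : u < y
      · rw [Set.indicator_of_mem (Set.mem_Ioi.mpr hyu)]
        have hmem : u / y ∈ Set.Ioo (0 : ℝ) 1 := by
          constructor
          · positivity
          · rw [div_lt_one hy]; exact hyu
        simp only [hF, hk₁, hk₂, if_pos hmem]
        have hC0 : (0:ℝ) ≤ C := by
          apply div_nonneg (Real.Gamma_pos_of_pos (by linarith)).le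
          exact mul_nonneg (Real.Gamma_pos_of_pos (by linarith)).le
            (Real.Gamma_pos_of_pos hα).le
        rw [← ENNReal.ofReal_mul (hf_nonneg y),
          ← ENNReal.ofReal_mul (mul_nonneg (hf_nonneg y) (by positivity)),
          ← ENNReal.ofReal_mul (mul_nonneg hC0 (Real.rpow_nonneg hu.le ζ))]
        congr 1
        exact key_real ζ α u y C (f y) hu hyu
      · rw [Set.indicator_of_notMem (by simpa using hyu)]
        have hnot : u / y ∉ Set.Ioo (0 : ℝ) 1 := by
          intro hmem
          exact hyu ((div_lt_one hy).mp hmem.2)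
        have hz : k₁ (u / y) = 0 := by
          simp only [hk₁, if_neg hnot, ofReal_zero]
        simp [hF, hz]
  · simp only [if_neg hu]
    have : ∀ y : ℝ, F y u = 0 := by
      intro y
      by_cases hfy : f y = 0
      · simp [hF, hk₂, hfy]
      · have hy : 0 < y := by
          by_contra h
          exact hfy (hf_supp y (le_of_not_gt h))
        have hnot : u / y ∉ Set.Ioo (0 : ℝ) 1 := by
          intro hmem
          apply hu
          have h0 : (0:ℝ) < u / y * y := mul_pos hmem.1 hy
          rwa [div_mul_cancel₀ _ hy.ne'] at h0
        have hz : k₁ (u / y) = 0 := by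
          simp only [hk₁, if_neg hnot, ofReal_zero]
        simp [hF, hz]
    exact (lintegral_congr this).trans lintegral_zero
end
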